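/- Let M be a commutative monoid, R a reflexive relation on M compatible with multiplication, and E : M → ℝ additive and monotone under R. Define the zero-error battery-assisted rate R_ze(a→b) as the supremum of m/n over positive integers m, n for which there exist τ, τ' ∈ M with (a^n * τ) R (b^m * τ') and E(τ') ≥ E(τ). If E(a) > 0 and E(b) > 0, then R_ze(a→b)·R_ze(b→a) = 1. -/
import Mathlib

lemma E_pow_aux {M : Type*} [CommMonoid M] (E : M → ℝ)
    (hadd : ∀ a b, E (a * b) = E a + E b) (a : M) (n : ℕ) :
    E (a ^ n) = n * E a := by
  induction n with
  | zero =>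
    have h1 : E (1 : M) = E 1 + E 1 := by rw [← hadd, one_mul]
    simp only [pow_zero, Nat.cast_zero, zero_mul]
    linarith
  | succ k ih =>
    rw [pow_succ, hadd, ih, Nat.cast_succ]
    ring

lemma rate_sup_aux {M : Type*} [CommMonoid M] (R : M → M → Prop)
    (hrefl : ∀ a, R a a)
    (E : M → ℝ) (hadd : ∀ a b, E (a * b) = E a + E b)
    (hmono : ∀ a b, R a b → E a ≥ E b)
    (a b : M) (ha : 0 < E a) (hb : 0 < E b) :
    sSup {x : ℝ | ∃ m n : ℕ, 0 < m ∧ 0 < n ∧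
        (∃ τ τ' : M, R (a ^ n * τ) (b ^ m * τ') ∧ E τ' ≥ E τ) ∧ x = (m : ℝ) / n}
      = E a / E b := by
  set S := {x : ℝ | ∃ m n : ℕ, 0 < m ∧ 0 < n ∧
        (∃ τ τ' : M, R (a ^ n * τ) (b ^ m * τ') ∧ E τ' ≥ E τ) ∧ x = (m : ℝ) / n}
  -- membership criterion: if m * E b ≤ n * E a with m,n > 0 then m/n ∈ S
  have hmem : ∀ m n : ℕ, 0 < m → 0 < n → (m : ℝ) * E b ≤ (n : ℝ) * E a →
      ((m : ℝ) / n) ∈ S := by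
    intro m n hm hn hle
    refine ⟨m, n, hm, hn, ⟨b ^ m, a ^ n, ?_, ?_⟩, rfl⟩
    · rw [mul_comm]; exact hrefl _
    · rw [E_pow_aux E hadd, E_pow_aux E hadd]; exact hle
  -- upper bound
  have hub : ∀ x ∈ S, x ≤ E a / E b := by
    rintro x ⟨m, n, hm, hn, ⟨τ, τ', hR, hE⟩, rfl⟩
    have h1 : E (a ^ n * τ) ≥ E (b ^ m * τ') := hmono _ _ hR
    rw [hadd, hadd, E_pow_aux E hadd, E_pow_aux E hadd] at h1
    have h2 : (m : ℝ) * E b ≤ (n : ℝ) * E a := by linarith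
    rw [div_le_div_iff₀ (by exact_mod_cast hn) hb]
    linarith [h2]
  apply le_antisymm
  · apply csSup_le
    · -- nonempty
      obtain ⟨n, hn⟩ := exists_nat_ge (E b / E a)
      have hn0 : 0 < n := by
        by_contra h
        push_neg at h
        interval_cases n
        simp at hn
        nlinarith [div_pos hb ha]
      exact ⟨_, hmem 1 n one_pos hn0 (by
        rw [div_le_iff₀ ha] at hn
        push_cast
        linarith)⟩
    · exact hub
  · by_contra h
    push_neg at h
    set w := sSup S
    have hwlt : max w 0 < E a / E b := by
      rcases max_cases w 0 with ⟨heq, _⟩ | ⟨heq, _⟩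
      · rw [heq]; exact h
      · rw [heq]; exact div_pos ha hb
    obtain ⟨q, hq1, hq2⟩ := exists_rat_btwn hwlt
    have hq0 : 0 < (q : ℝ) := lt_of_le_of_lt (le_max_right w 0) hq1
    have hq0' : 0 < q := by exact_mod_cast hq0
    set m := q.num.toNat
    set n := q.den
    have hm : 0 < m := by
      simp only [m, Int.lt_toNat]
      exact_mod_cast Rat.num_pos.mpr hq0'
    have hn : 0 < n := q.pos
    have hqmn : (q : ℝ) = (m : ℝ) / n := by
      rw [Rat.cast_def]
      congr 1
      exact_mod_cast (Int.toNat_of_nonneg (le_of_lt (Rat.num_pos.mpr hq0'))).symm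
    have hle : (m : ℝ) * E b ≤ (n : ℝ) * E a := by
      have := le_of_lt hq2
      rw [hqmn, div_le_div_iff₀ (by exact_mod_cast hn) hb] at this
      linarith
    have hmemS : ((m : ℝ) / n) ∈ S := hmem m n hm hn hle
    have hbdd : BddAbove S := ⟨E a / E b, hub⟩
    have := le_csSup hbdd hmemS
    rw [← hqmn] at this
    have : w < w := lt_of_lt_of_le (lt_of_le_of_lt (le_max_left w 0) hq1) this
    exact lt_irrefl _ this

/-- Reversibility: the zero-error battery-assisted rates satisfy
`R_ze(a→b) · R_ze(b→a) = 1`. -/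
theorem zero_error_reversibility {M : Type*} [CommMonoid M] (R : M → M → Prop)
    (hrefl : ∀ a, R a a) (hcompat : ∀ a b c, R a b → R (a * c) (b * c))
    (E : M → ℝ) (hadd : ∀ a b, E (a * b) = E a + E b)
    (hmono : ∀ a b, R a b → E a ≥ E b)
    (a b : M) (ha : 0 < E a) (hb : 0 < E b) :
    sSup {x : ℝ | ∃ m n : ℕ, 0 < m ∧ 0 < n ∧
        (∃ τ τ' : M, R (a ^ n * τ) (b ^ m * τ') ∧ E τ' ≥ E τ) ∧ x = (m : ℝ) / n} *
      sSup {x : ℝ | ∃ m n : ℕ, 0 < m ∧ 0 < n ∧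
        (∃ τ τ' : M, R (b ^ n * τ) (a ^ m * τ') ∧ E τ' ≥ E τ) ∧ x = (m : ℝ) / n} = 1 := by
  rw [rate_sup_aux R hrefl E hadd hmono a b ha hb,
      rate_sup_aux R hrefl E hadd hmono b a hb ha]
  field_simp
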